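/- Let e be a 3×3 real matrix and b = I + 2·e, and write I₁(A) = trace(A), I₂(A) = (1/2)·((trace A)² − trace(A·A)). Then I₁(b)·b − b·b − (2/3)·I₂(b)·I = 2·(I₁(e)·I − e)·b + 4·(e − (2/3)·I₁(e)·I − (2/3)·I₂(e)·I). -/
import Mathlib


theorem stmt_14 (e b : Matrix (Fin 3) (Fin 3) ℝ)
    (hb : b = 1 + (2 : ℝ) • e)
    (I₁ I₂ : Matrix (Fin 3) (Fin 3) ℝ → ℝ)
    (hI₁ : ∀ A, I₁ A = Matrix.trace A)
    (hI₂ : ∀ A, I₂ A = (1 / 2 : ℝ) * ((Matrix.trace A) ^ 2 - Matrix.trace (A * A))) :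
    I₁ b • b - b * b - (2 / 3 * I₂ b) • (1 : Matrix (Fin 3) (Fin 3) ℝ)
      = (2 : ℝ) • ((I₁ e • (1 : Matrix (Fin 3) (Fin 3) ℝ) - e) * b)
        + (4 : ℝ) • (e - (2 / 3 * I₁ e) • (1 : Matrix (Fin 3) (Fin 3) ℝ)
            - (2 / 3 * I₂ e) • (1 : Matrix (Fin 3) (Fin 3) ℝ)) := by
  subst hb
  ext i j
  simp only [hI₁, hI₂, Matrix.trace, Matrix.diag, Matrix.mul_apply, Fin.sum_univ_succ,
    Fin.sum_univ_zero, Matrix.sub_apply, Matrix.add_apply, Matrix.smul_apply,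
    Matrix.one_apply, smul_eq_mul]
  fin_cases i <;> fin_cases j <;> simp <;> ring
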